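/- Let complex numbers k^{(n)}_{A,ij} (n finite index, i,j ∈ {1,…,d}) satisfy ∑_l ∑_n conj(k^{(n)}_{A,li}) k^{(n)}_{A,lj} = δ_{ij} (Kraus normalization). If u = (u_{A,ei}) is a unitary matrix such that the vector (∑_n |k^{(n)}_{A,ei}|²)_e majorizes (|u_{A,ei}|²)_e for every i, then ∑_{e,f} ∑_n |k^{(n)}_{A,ei} k^{(n)}_{A,fj}| ≤ ∑_{e,f} |u_{A,ei} u_{A,fj}| for all i, j. -/

import Mathlib

open Matrix BigOperators Finset

/-- `x` majorizes `y`: every partial sum of `y` over a subset is dominated by a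
sum of `x` over some subset of the same cardinality (equivalently, top-`k` sums
of `x` dominate those of `y`), and the total sums agree. -/
def Majorizes {d : ℕ} (x y : Fin d → ℝ) : Prop :=
  (∀ A : Finset (Fin d), ∃ B : Finset (Fin d), B.card = A.card ∧
    ∑ e ∈ A, y e ≤ ∑ e ∈ B, x e) ∧
  ∑ e, x e = ∑ e, y e


private lemma abel_aux (c D : ℕ → ℝ) (hc : Monotone c) :
    ∀ n : ℕ, (∀ m ≤ n, 0 ≤ ∑ e ∈ Finset.range m, D e) →
      ∑ e ∈ Finset.range n, c e * D e ≤ c n * ∑ e ∈ Finset.range n, D e := by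
  intro n
  induction n with
  | zero => simp
  | succ n ih =>
    intro h
    have h1 := ih (fun m hm => h m (hm.trans (Nat.le_succ n)))
    have h2 : c n * (∑ e ∈ Finset.range n, D e + D n)
        ≤ c (n+1) * (∑ e ∈ Finset.range n, D e + D n) := by
      apply mul_le_mul_of_nonneg_right (hc (Nat.le_succ n))
      have := h (n+1) le_rfl
      rwa [Finset.sum_range_succ] at this
    have h3 : c n * (∑ e ∈ Finset.range n, D e + D n)
        = c n * ∑ e ∈ Finset.range n, D e + c n * D n := mul_add _ _ _
    rw [Finset.sum_range_succ, Finset.sum_range_succ (f := D)]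
    linarith

private lemma schur_sqrt (d : ℕ) (X Y : ℕ → ℝ)
    (hX0 : ∀ e, 0 ≤ X e) (hY0 : ∀ e, 0 ≤ Y e)
    (hXz : ∀ e, d ≤ e → X e = 0)
    (hYant : Antitone Y) (hYz : Y d = 0)
    (hpart : ∀ m, ∑ e ∈ Finset.range m, Y e ≤ ∑ e ∈ Finset.range m, X e)
    (htot : ∑ e ∈ Finset.range d, X e = ∑ e ∈ Finset.range d, Y e) :
    ∑ e ∈ Finset.range d, Real.sqrt (X e) ≤ ∑ e ∈ Finset.range d, Real.sqrt (Y e) := by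
  have hex : ∃ n, Y n = 0 := ⟨d, hYz⟩
  set m₀ := Nat.find hex with hm₀
  have hm0d : m₀ ≤ d := Nat.find_le hYz
  have hYpos : ∀ e < m₀, 0 < Y e := fun e he =>
    (hY0 e).lt_of_ne (Ne.symm (Nat.find_min hex he))
  have hYzero : ∀ e, m₀ ≤ e → Y e = 0 := fun e he =>
    le_antisymm ((hYant he).trans_eq (Nat.find_spec hex)) (hY0 e)
  have hsub : Finset.range m₀ ⊆ Finset.range d := Finset.range_subset_range.2 hm0d
  have htotY : ∑ e ∈ Finset.range m₀, Y e = ∑ e ∈ Finset.range d, Y e :=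
    Finset.sum_subset hsub (fun x _ hx => hYzero x (by simpa using hx))
  -- split X total
  have hsplit : ∑ e ∈ Finset.range m₀, X e + ∑ e ∈ Finset.Ico m₀ d, X e
      = ∑ e ∈ Finset.range d, X e := by
    rw [Finset.range_eq_Ico, Finset.range_eq_Ico]
    exact Finset.sum_Ico_consecutive _ (Nat.zero_le _) hm0d
  have hIco0 : ∑ e ∈ Finset.Ico m₀ d, X e = 0 := by
    have h1 := hpart m₀
    have h2 : (0:ℝ) ≤ ∑ e ∈ Finset.Ico m₀ d, X e :=
      Finset.sum_nonneg fun e _ => hX0 e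
    linarith
  have hXzero : ∀ e, m₀ ≤ e → X e = 0 := by
    intro e he
    by_cases hed : e < d
    · exact (Finset.sum_eq_zero_iff_of_nonneg (fun i _ => hX0 i)).1 hIco0 e
        (Finset.mem_Ico.2 ⟨he, hed⟩)
    · exact hXz e (le_of_not_gt hed)
  have hsumXm : ∑ e ∈ Finset.range m₀, X e = ∑ e ∈ Finset.range m₀, Y e := by
    linarith
  -- reduce sqrt sums to range m₀
  have hLX : ∑ e ∈ Finset.range d, Real.sqrt (X e)
      = ∑ e ∈ Finset.range m₀, Real.sqrt (X e) :=
    (Finset.sum_subset hsub (fun x _ hx => by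
      rw [hXzero x (by simpa using hx), Real.sqrt_zero])).symm
  have hLY : ∑ e ∈ Finset.range d, Real.sqrt (Y e)
      = ∑ e ∈ Finset.range m₀, Real.sqrt (Y e) :=
    (Finset.sum_subset hsub (fun x _ hx => by
      rw [hYzero x (by simpa using hx), Real.sqrt_zero])).symm
  rw [hLX, hLY]
  -- the supergradient weights
  set c : ℕ → ℝ := fun e => 1 / (2 * Real.sqrt (Y (min e (m₀ - 1)))) with hcdef
  have hc : Monotone c := by
    rcases Nat.eq_zero_or_pos m₀ with h0 | hpos
    · intro a b hab
      simp [hcdef, h0]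
    · intro a b hab
      have hma : min a (m₀ - 1) < m₀ := lt_of_le_of_lt (min_le_right _ _) (by omega)
      have hmb : min b (m₀ - 1) < m₀ := lt_of_le_of_lt (min_le_right _ _) (by omega)
      have hya : 0 < Y (min a (m₀ - 1)) := hYpos _ hma
      have hyb : 0 < Y (min b (m₀ - 1)) := hYpos _ hmb
      have hle : Y (min b (m₀ - 1)) ≤ Y (min a (m₀ - 1)) :=
        hYant (min_le_min hab le_rfl)
      have : 2 * Real.sqrt (Y (min b (m₀ - 1))) ≤ 2 * Real.sqrt (Y (min a (m₀ - 1))) := by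
        have := Real.sqrt_le_sqrt hle
        linarith
      exact one_div_le_one_div_of_le (by positivity) this
  have hceq : ∀ e < m₀, c e = 1 / (2 * Real.sqrt (Y e)) := by
    intro e he
    have : min e (m₀ - 1) = e := min_eq_left (by omega)
    simp [hcdef, this]
  -- pointwise AM-GM bound
  have hpoint : ∀ e ∈ Finset.range m₀,
      Real.sqrt (X e) ≤ X e * c e + Real.sqrt (Y e) / 2 := by
    intro e he
    rw [Finset.mem_range] at he
    rw [hceq e he]
    set s := Real.sqrt (Y e) with hs
    have hspos : 0 < s := Real.sqrt_pos.2 (hYpos e he)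
    have hXsq : Real.sqrt (X e) ^ 2 = X e := Real.sq_sqrt (hX0 e)
    have key : 2 * s * Real.sqrt (X e) ≤ X e + s ^ 2 := by
      nlinarith [sq_nonneg (Real.sqrt (X e) - s)]
    have heq : X e * (1 / (2 * s)) + s / 2 = (X e + s ^ 2) / (2 * s) := by
      field_simp
    rw [heq, le_div_iff₀ (by positivity)]
    nlinarith [key]
  -- abel summation
  have habel : ∑ e ∈ Finset.range m₀, c e * (X e - Y e) ≤ 0 := by
    have h1 := abel_aux c (fun e => X e - Y e) hc m₀ (fun m hm => by
      rw [Finset.sum_sub_distrib]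
      have := hpart m
      linarith)
    have h2 : ∑ e ∈ Finset.range m₀, (X e - Y e) = 0 := by
      rw [Finset.sum_sub_distrib, hsumXm]; ring
    rw [h2, mul_zero] at h1
    exact h1
  have hXc_le : ∑ e ∈ Finset.range m₀, X e * c e ≤ ∑ e ∈ Finset.range m₀, Y e * c e := by
    have : ∑ e ∈ Finset.range m₀, c e * (X e - Y e)
        = ∑ e ∈ Finset.range m₀, X e * c e - ∑ e ∈ Finset.range m₀, Y e * c e := by
      rw [← Finset.sum_sub_distrib]
      exact Finset.sum_congr rfl fun e _ => by ring
    linarith [habel, this ▸ habel]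
  have hYc : ∀ e ∈ Finset.range m₀, Y e * c e = Real.sqrt (Y e) / 2 := by
    intro e he
    rw [Finset.mem_range] at he
    rw [hceq e he]
    have hspos : 0 < Real.sqrt (Y e) := Real.sqrt_pos.2 (hYpos e he)
    have : Real.sqrt (Y e) * Real.sqrt (Y e) = Y e := Real.mul_self_sqrt (hY0 e)
    field_simp
    nlinarith [this]
  calc ∑ e ∈ Finset.range m₀, Real.sqrt (X e)
      ≤ ∑ e ∈ Finset.range m₀, (X e * c e + Real.sqrt (Y e) / 2) :=
        Finset.sum_le_sum hpoint
    _ = ∑ e ∈ Finset.range m₀, X e * c e + ∑ e ∈ Finset.range m₀, Real.sqrt (Y e) / 2 :=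
        Finset.sum_add_distrib
    _ ≤ ∑ e ∈ Finset.range m₀, Y e * c e + ∑ e ∈ Finset.range m₀, Real.sqrt (Y e) / 2 := by
        linarith
    _ = ∑ e ∈ Finset.range m₀, Real.sqrt (Y e) / 2
        + ∑ e ∈ Finset.range m₀, Real.sqrt (Y e) / 2 := by
        rw [Finset.sum_congr rfl hYc]
    _ = ∑ e ∈ Finset.range m₀, Real.sqrt (Y e) := by
        rw [← Finset.sum_add_distrib]
        exact Finset.sum_congr rfl fun e _ => by ring


private lemma sum_le_take {d : ℕ} (w : Fin d → ℝ) (hw : Antitone w) (B : Finset (Fin d)) :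
    ∑ e ∈ B, w e ≤ ∑ i ∈ Finset.range B.card, (if h : i < d then w ⟨i, h⟩ else 0) := by
  set m := B.card with hm
  have hmd : m ≤ d := by
    have := Finset.card_le_univ B
    simpa using this
  have key : ∀ j, ∀ h : j < m, j ≤ ((B.orderEmbOfFin hm.symm) ⟨j, h⟩ : Fin d).val := by
    intro j
    induction j with
    | zero => intro h; exact Nat.zero_le _
    | succ j ih =>
      intro h
      have hj : j < m := Nat.lt_of_succ_lt h
      have h1 := ih hj
      have h2 : (B.orderEmbOfFin hm.symm) ⟨j, hj⟩ < (B.orderEmbOfFin hm.symm) ⟨j+1, h⟩ :=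
        (B.orderEmbOfFin hm.symm).strictMono (Fin.mk_lt_mk.2 (Nat.lt_succ_self j))
      have h3 : ((B.orderEmbOfFin hm.symm) ⟨j, hj⟩ : Fin d).val
          < ((B.orderEmbOfFin hm.symm) ⟨j+1, h⟩ : Fin d).val := h2
      omega
  have hsum : ∑ e ∈ B, w e = ∑ i : Fin m, w ((B.orderEmbOfFin hm.symm) i) := by
    rw [← Finset.sum_attach B w]
    exact (Fintype.sum_equiv (B.orderIsoOfFin hm.symm).toEquiv
      (fun i => w ((B.orderEmbOfFin hm.symm) i)) (fun x => w ↑x)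
      (fun i => congrArg w (Finset.coe_orderIsoOfFin_apply B hm.symm i).symm)).symm
  rw [hsum, Finset.sum_range]
  apply Finset.sum_le_sum
  intro i _
  rw [dif_pos (lt_of_lt_of_le i.2 hmd)]
  apply hw
  exact Fin.mk_le_mk.2 (key i i.2) |>.trans_eq rfl



private lemma maj_sqrt {d : ℕ} (x y : Fin d → ℝ) (hx : ∀ e, 0 ≤ x e) (hy : ∀ e, 0 ≤ y e)
    (hmaj : Majorizes x y) : ∑ e, Real.sqrt (x e) ≤ ∑ e, Real.sqrt (y e) := by
  obtain ⟨hA, htot⟩ := hmaj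
  set σ := Tuple.sort (fun e => -x e) with hσ
  set τ := Tuple.sort (fun e => -y e) with hτ
  have hxs : Antitone (fun i => x (σ i)) := by
    intro a b hab
    have := Tuple.monotone_sort (fun e => -x e) hab
    simpa using this
  have hys : Antitone (fun i => y (τ i)) := by
    intro a b hab
    have := Tuple.monotone_sort (fun e => -y e) hab
    simpa using this
  set X : ℕ → ℝ := fun n => if h : n < d then x (σ ⟨n, h⟩) else 0 with hX
  set Y : ℕ → ℝ := fun n => if h : n < d then y (τ ⟨n, h⟩) else 0 with hY
  have hconv : ∀ (w : Fin d → ℝ) (π : Equiv.Perm (Fin d)),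
      ∑ e ∈ Finset.range d, (if h : e < d then w (π ⟨e, h⟩) else 0) = ∑ e, w e := by
    intro w π
    rw [Finset.sum_range]
    rw [show (∑ i : Fin d, if h : (i : ℕ) < d then w (π ⟨(i : ℕ), h⟩) else 0)
        = ∑ i : Fin d, w (π i) from Finset.sum_congr rfl fun i _ => by
          rw [dif_pos i.is_lt]]
    exact Equiv.sum_comp π w
  have hX0 : ∀ e, 0 ≤ X e := by
    intro e; rw [hX]; dsimp only
    split
    · exact hx _
    · exact le_refl 0
  have hY0 : ∀ e, 0 ≤ Y e := by
    intro e; rw [hY]; dsimp only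
    split
    · exact hy _
    · exact le_refl 0
  have hXz : ∀ e, d ≤ e → X e = 0 := fun e he => dif_neg (by omega)
  have hYz : Y d = 0 := dif_neg (lt_irrefl d)
  have hYant : Antitone Y := by
    apply antitone_nat_of_succ_le
    intro n
    by_cases h1 : n + 1 < d
    · have h0 : n < d := by omega
      show (if h : n + 1 < d then y (τ ⟨n + 1, h⟩) else 0)
          ≤ (if h : n < d then y (τ ⟨n, h⟩) else 0)
      rw [dif_pos h1, dif_pos h0]
      exact hys (Fin.mk_le_mk.2 (Nat.le_succ n))
    · have : Y (n + 1) = 0 := dif_neg h1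
      rw [this]
      exact hY0 n
  have htotX : ∑ e ∈ Finset.range d, X e = ∑ e, x e := hconv x σ
  have htotY : ∑ e ∈ Finset.range d, Y e = ∑ e, y e := hconv y τ
  have htotR : ∑ e ∈ Finset.range d, X e = ∑ e ∈ Finset.range d, Y e := by
    rw [htotX, htotY, htot]
  have hpart : ∀ m, ∑ e ∈ Finset.range m, Y e ≤ ∑ e ∈ Finset.range m, X e := by
    intro m
    by_cases hmd' : m < d
    · have hmd : m ≤ d := le_of_lt hmd'
      set A : Finset (Fin d) :=
        Finset.image (fun i : Fin m => τ ⟨(i : ℕ), lt_of_lt_of_le i.is_lt hmd⟩)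
          Finset.univ with hAdef
      have hinj : Function.Injective
          (fun i : Fin m => τ ⟨(i : ℕ), lt_of_lt_of_le i.is_lt hmd⟩) := by
        intro a b hab
        have := τ.injective hab
        exact Fin.ext (Fin.mk.inj_iff.1 this)
      have hAcard : A.card = m := by
        rw [hAdef, Finset.card_image_of_injective _ hinj, Finset.card_univ,
          Fintype.card_fin]
      have hAsum : ∑ e ∈ A, y e = ∑ e ∈ Finset.range m, Y e := by
        rw [hAdef, Finset.sum_image (fun a _ b _ h => hinj h), Finset.sum_range]
        exact Finset.sum_congr rfl fun i _ => by
          rw [show Y (i : ℕ) = y (τ ⟨(i : ℕ), lt_of_lt_of_le i.is_lt hmd⟩) from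
            dif_pos _]
      obtain ⟨B, hBc, hAB⟩ := hA A
      set B' := B.image σ.symm with hB'def
      have hB'c : B'.card = m := by
        rw [hB'def, Finset.card_image_of_injective _ σ.symm.injective, hBc, hAcard]
      have hB'sum : ∑ e ∈ B', x (σ e) = ∑ e ∈ B, x e := by
        rw [hB'def, Finset.sum_image (fun a _ b _ h => σ.symm.injective h)]
        exact Finset.sum_congr rfl fun b _ => by rw [Equiv.apply_symm_apply]
      have htake := sum_le_take (fun i => x (σ i)) hxs B'
      rw [hB'c] at htake
      calc ∑ e ∈ Finset.range m, Y e = ∑ e ∈ A, y e := hAsum.symm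
        _ ≤ ∑ e ∈ B, x e := hAB
        _ = ∑ e ∈ B', x (σ e) := hB'sum.symm
        _ ≤ ∑ i ∈ Finset.range m, (if h : i < d then x (σ ⟨i, h⟩) else 0) := htake
        _ = ∑ i ∈ Finset.range m, X i := rfl
    · have hdm : d ≤ m := le_of_not_gt hmd'
      have hsub : Finset.range d ⊆ Finset.range m := Finset.range_subset_range.2 hdm
      have h1 : ∑ e ∈ Finset.range m, Y e = ∑ e ∈ Finset.range d, Y e :=
        (Finset.sum_subset hsub (fun e _ he => dif_neg (by
          simp only [Finset.mem_range, not_lt] at he; omega))).symm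
      have h2 : ∑ e ∈ Finset.range m, X e = ∑ e ∈ Finset.range d, X e :=
        (Finset.sum_subset hsub (fun e _ he => dif_neg (by
          simp only [Finset.mem_range, not_lt] at he; omega))).symm
      rw [h1, h2, htotR]
  have hmain := schur_sqrt d X Y hX0 hY0 hXz hYant hYz hpart htotR
  have hLX : ∑ e ∈ Finset.range d, Real.sqrt (X e) = ∑ e, Real.sqrt (x e) := by
    rw [show ∑ e ∈ Finset.range d, Real.sqrt (X e)
        = ∑ e ∈ Finset.range d, (if h : e < d then Real.sqrt (x (σ ⟨e, h⟩)) else 0) from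
      Finset.sum_congr rfl fun e he => by
        rw [Finset.mem_range] at he
        rw [show X e = x (σ ⟨e, he⟩) from dif_pos he, dif_pos he]]
    exact hconv (fun e => Real.sqrt (x e)) σ
  have hLY : ∑ e ∈ Finset.range d, Real.sqrt (Y e) = ∑ e, Real.sqrt (y e) := by
    rw [show ∑ e ∈ Finset.range d, Real.sqrt (Y e)
        = ∑ e ∈ Finset.range d, (if h : e < d then Real.sqrt (y (τ ⟨e, h⟩)) else 0) from
      Finset.sum_congr rfl fun e he => by
        rw [Finset.mem_range] at he
        rw [show Y e = y (τ ⟨e, he⟩) from dif_pos he, dif_pos he]]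
    exact hconv (fun e => Real.sqrt (y e)) τ
  rw [hLX, hLY] at hmain
  exact hmain



theorem stmt18 {N d : ℕ} (k : Fin N → Fin d → Fin d → ℂ)
    (hkraus : ∀ i j : Fin d,
      ∑ e, ∑ n, (starRingEnd ℂ) (k n e i) * k n e j = if i = j then 1 else 0)
    (u : Matrix (Fin d) (Fin d) ℂ) (hu : u ∈ Matrix.unitaryGroup (Fin d) ℂ)
    (hmaj : ∀ i : Fin d,
      Majorizes (fun e => ∑ n, ‖k n e i‖ ^ 2)
        (fun e => ‖u e i‖ ^ 2)) :
    ∀ i j : Fin d,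
      ∑ e, ∑ f, ∑ n, ‖k n e i * k n f j‖
        ≤ ∑ e, ∑ f, ‖u e i * u f j‖ := by
  intro i j
  set x : Fin d → Fin d → ℝ := fun i e => ∑ n, ‖k n e i‖ ^ 2 with hxdef
  have hx0 : ∀ i e, 0 ≤ x i e := fun i e =>
    Finset.sum_nonneg fun n _ => sq_nonneg _
  have hy0 : ∀ (i : Fin d) (e : Fin d), (0:ℝ) ≤ ‖u e i‖ ^ 2 :=
    fun i e => sq_nonneg _
  -- Cauchy-Schwarz pointwise
  have hCS : ∀ e f : Fin d, ∑ n, ‖k n e i * k n f j‖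
      ≤ Real.sqrt (x i e) * Real.sqrt (x j f) := by
    intro e f
    have h1 : ∑ n, ‖k n e i * k n f j‖
        = ∑ n, ‖k n e i‖ * ‖k n f j‖ :=
      Finset.sum_congr rfl fun n _ => norm_mul _ _
    have h2 := Finset.sum_mul_sq_le_sq_mul_sq Finset.univ
      (fun n => ‖k n e i‖) (fun n => ‖k n f j‖)
    have h3 : 0 ≤ ∑ n, ‖k n e i‖ * ‖k n f j‖ :=
      Finset.sum_nonneg fun n _ =>
        mul_nonneg (norm_nonneg _) (norm_nonneg _)
    rw [h1]
    have h4 : ∑ n, ‖k n e i‖ * ‖k n f j‖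
        = Real.sqrt ((∑ n, ‖k n e i‖ * ‖k n f j‖) ^ 2) :=
      (Real.sqrt_sq h3).symm
    rw [h4, ← Real.sqrt_mul (hx0 i e)]
    exact Real.sqrt_le_sqrt h2
  -- right side factorization
  have hR : ∑ e, ∑ f, ‖u e i * u f j‖
      = (∑ e, Real.sqrt (‖u e i‖ ^ 2))
        * (∑ f, Real.sqrt (‖u f j‖ ^ 2)) := by
    rw [Finset.sum_mul_sum]
    exact Finset.sum_congr rfl fun e _ => Finset.sum_congr rfl fun f _ => by
      rw [norm_mul, Real.sqrt_sq (norm_nonneg _),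
        Real.sqrt_sq (norm_nonneg _)]
  have hmi := maj_sqrt _ _ (hx0 i) (hy0 i) (hmaj i)
  have hmj := maj_sqrt _ _ (hx0 j) (hy0 j) (hmaj j)
  have hxi_nonneg : (0:ℝ) ≤ ∑ e, Real.sqrt (x i e) :=
    Finset.sum_nonneg fun e _ => Real.sqrt_nonneg _
  have hxj_nonneg : (0:ℝ) ≤ ∑ f, Real.sqrt (x j f) :=
    Finset.sum_nonneg fun f _ => Real.sqrt_nonneg _
  have hyi_nonneg : (0:ℝ) ≤ ∑ e, Real.sqrt (‖u e i‖ ^ 2) :=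
    Finset.sum_nonneg fun e _ => Real.sqrt_nonneg _
  calc ∑ e, ∑ f, ∑ n, ‖k n e i * k n f j‖
      ≤ ∑ e, ∑ f, Real.sqrt (x i e) * Real.sqrt (x j f) :=
        Finset.sum_le_sum fun e _ => Finset.sum_le_sum fun f _ => hCS e f
    _ = (∑ e, Real.sqrt (x i e)) * (∑ f, Real.sqrt (x j f)) :=
        (Finset.sum_mul_sum _ _ _ _).symm
    _ ≤ (∑ e, Real.sqrt (‖u e i‖ ^ 2))
        * (∑ f, Real.sqrt (‖u f j‖ ^ 2)) :=
        mul_le_mul hmi hmj hxj_nonneg hyi_nonneg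
    _ = ∑ e, ∑ f, ‖u e i * u f j‖ := hR.symm
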